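/- Let λ_i ∈ [0,1], β_i ∈ (0,1], and suppose W is row-stochastic with nonnegative entries, y_j ∈ [-1,1] for all j, and u_i ∈ [-1,1]. Then the function g(ζ_o) = f_i((+1, ζ_o), z), viewed as a function of ζ_o ∈ ℝ, has second derivative equal to -β_i (so g is strictly concave), its unique global maximizer is ζ_o⁺ = (1-λ_i)(1-γ_i) Σ_j w_{ij} y_j + (1-λ_i)γ_i u_i + λ_i, and ζ_o⁺ ∈ [-1,+1]. Analogously, the function h(ζ_o) = f_i((-1, ζ_o), z) is strictly concave with unique maximizer ζ_o⁻ = (1-λ_i)(1-γ_i) Σ_j w_{ij} y_j + (1-λ_i)γ_i u_i - λ_i, and ζ_o⁻ ∈ [-1,+1]. -/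

import Mathlib

open Finset

/-- The payoff of agent `i` for strategy `ζ = (ζ_a, ζ_o)` given the state `(x, y)`. -/
noncomputable def payoff {n : ℕ} (A W : Fin n → Fin n → ℝ) (α lam β γ : ℝ)
    (u x y : Fin n → ℝ) (i : Fin n) (ζ : ℝ × ℝ) : ℝ :=
  lam * (1 - β) / 4 *
      ∑ j, A i j * ((1 - x j) * (1 - ζ.1) + (1 + α) * (1 + x j) * (1 + ζ.1))
    - 1 / 2 * β * (1 - lam) * (1 - γ) * ∑ j, W i j * (ζ.2 - y j) ^ 2
    - 1 / 2 * β * (1 - lam) * γ * (ζ.2 - u i) ^ 2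
    - 1 / 2 * lam * β * (ζ.1 - ζ.2) ^ 2

lemma stmt2_aux {n : ℕ} (A W : Fin n → Fin n → ℝ) (α lam β γ : ℝ)
    (u x y : Fin n → ℝ) (i : Fin n) (hWrow : ∑ k, W i k = 1) (hβ : 0 < β)
    (a z : ℝ)
    (hz : z = (1 - lam) * (1 - γ) * (∑ j, W i j * y j) + (1 - lam) * γ * u i + lam * a) :
    (∀ s : ℝ, deriv (deriv (fun t : ℝ => payoff A W α lam β γ u x y i (a, t))) s = -β) ∧
      StrictConcaveOn ℝ Set.univ (fun t : ℝ => payoff A W α lam β γ u x y i (a, t)) ∧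
      (∀ t : ℝ, payoff A W α lam β γ u x y i (a, t) ≤ payoff A W α lam β γ u x y i (a, z)) ∧
      (∀ s : ℝ, (∀ t : ℝ, payoff A W α lam β γ u x y i (a, t) ≤
          payoff A W α lam β γ u x y i (a, s)) → s = z) := by
  have hsum : ∀ t : ℝ, ∑ j, W i j * (t - y j) ^ 2
      = t ^ 2 - 2 * t * (∑ j, W i j * y j) + ∑ j, W i j * y j ^ 2 := by
    intro t
    have h : ∀ j : Fin n, W i j * (t - y j) ^ 2
        = t ^ 2 * W i j - 2 * t * (W i j * y j) + W i j * y j ^ 2 := fun j => by ring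
    simp only [h, Finset.sum_add_distrib, Finset.sum_sub_distrib, ← Finset.mul_sum, hWrow]
    ring
  have key : ∀ t : ℝ, payoff A W α lam β γ u x y i (a, t)
      = payoff A W α lam β γ u x y i (a, z) - β / 2 * (t - z) ^ 2 := by
    intro t
    simp only [payoff]
    rw [hsum t, hsum z, hz]
    ring
  have hfe : (fun t : ℝ => payoff A W α lam β γ u x y i (a, t))
      = fun t : ℝ => payoff A W α lam β γ u x y i (a, z) - β / 2 * (t - z) ^ 2 :=
    funext key
  set C : ℝ := payoff A W α lam β γ u x y i (a, z) with hC
  have hd1 : ∀ s : ℝ, HasDerivAt (fun t : ℝ => C - β / 2 * (t - z) ^ 2) (-(β * (s - z))) s := by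
    intro s
    have h := ((((hasDerivAt_id s).sub_const z).pow 2).const_mul (β / 2)).const_sub C
    refine h.congr_deriv ?_
    simp only [id_eq]
    push_cast
    ring
  have hderiv : deriv (fun t : ℝ => payoff A W α lam β γ u x y i (a, t))
      = fun s : ℝ => -(β * (s - z)) := by
    rw [hfe]
    funext s
    exact (hd1 s).deriv
  refine ⟨?_, ?_, ?_, ?_⟩
  · intro s
    rw [hderiv]
    have h := (((hasDerivAt_id s).sub_const z).const_mul β).neg
    have h2 : HasDerivAt (fun s : ℝ => -(β * (s - z))) (-β) s := by
      refine h.congr_deriv ?_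
      ring
    exact h2.deriv
  · rw [hfe]
    refine ⟨convex_univ, ?_⟩
    intro p _ q _ hpq c d hc hd hcd
    simp only [smul_eq_mul]
    have hsq : 0 < (p - q) ^ 2 := pow_two_pos_of_ne_zero (sub_ne_zero.mpr hpq)
    have hd2 : d = 1 - c := by linarith
    subst hd2
    nlinarith [mul_pos hβ (mul_pos (mul_pos hc hd) hsq)]
  · intro t
    rw [key t]
    nlinarith [sq_nonneg (t - z)]
  · intro s hs
    have h1 := hs z
    rw [key s] at h1
    have h2 : (s - z) ^ 2 = 0 := by nlinarith [sq_nonneg (s - z)]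
    have := sq_eq_zero_iff.mp h2
    linarith [sub_eq_zero.mp this]

theorem stmt2 {n : ℕ} (hn : 2 ≤ n) (A W : Fin n → Fin n → ℝ) (α lam β γ : ℝ)
    (u x y : Fin n → ℝ) (i : Fin n)
    (hA : ∀ j k, 0 ≤ A j k) (hW : ∀ j k, 0 ≤ W j k)
    (hArow : ∀ j, ∑ k, A j k = 1) (hWrow : ∀ j, ∑ k, W j k = 1)
    (hα : 0 ≤ α) (hlam : lam ∈ Set.Icc (0 : ℝ) 1) (hβ : β ∈ Set.Ioc (0 : ℝ) 1)
    (hγ : γ ∈ Set.Icc (0 : ℝ) 1) (hu : ∀ j, u j ∈ Set.Icc (-1 : ℝ) 1)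
    (hx : ∀ j, x j = -1 ∨ x j = 1) (hy : ∀ j, y j ∈ Set.Icc (-1 : ℝ) 1)
    (zp zm : ℝ)
    (hzp : zp = (1 - lam) * (1 - γ) * (∑ j, W i j * y j) + (1 - lam) * γ * u i + lam)
    (hzm : zm = (1 - lam) * (1 - γ) * (∑ j, W i j * y j) + (1 - lam) * γ * u i - lam) :
    -- the map `ζ_o ↦ f_i((+1, ζ_o), z)`
    ((∀ s : ℝ, deriv (deriv (fun t : ℝ => payoff A W α lam β γ u x y i (1, t))) s = -β) ∧
      StrictConcaveOn ℝ Set.univ (fun t : ℝ => payoff A W α lam β γ u x y i (1, t)) ∧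
      (∀ t : ℝ, payoff A W α lam β γ u x y i (1, t) ≤ payoff A W α lam β γ u x y i (1, zp)) ∧
      (∀ s : ℝ, (∀ t : ℝ, payoff A W α lam β γ u x y i (1, t) ≤
          payoff A W α lam β γ u x y i (1, s)) → s = zp) ∧
      zp ∈ Set.Icc (-1 : ℝ) 1) ∧
    -- the map `ζ_o ↦ f_i((-1, ζ_o), z)`
    ((∀ s : ℝ, deriv (deriv (fun t : ℝ => payoff A W α lam β γ u x y i (-1, t))) s = -β) ∧
      StrictConcaveOn ℝ Set.univ (fun t : ℝ => payoff A W α lam β γ u x y i (-1, t)) ∧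
      (∀ t : ℝ, payoff A W α lam β γ u x y i (-1, t) ≤ payoff A W α lam β γ u x y i (-1, zm)) ∧
      (∀ s : ℝ, (∀ t : ℝ, payoff A W α lam β γ u x y i (-1, t) ≤
          payoff A W α lam β γ u x y i (-1, s)) → s = zm) ∧
      zm ∈ Set.Icc (-1 : ℝ) 1) := by
  have hS1 : (∑ j, W i j * y j) ≤ 1 := by
    calc (∑ j, W i j * y j) ≤ ∑ j, W i j * 1 :=
          Finset.sum_le_sum fun j _ => mul_le_mul_of_nonneg_left (hy j).2 (hW i j)
      _ = 1 := by simp [hWrow i]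
  have hS2 : (-1 : ℝ) ≤ ∑ j, W i j * y j := by
    calc (-1 : ℝ) = ∑ j, W i j * (-1) := by
          rw [← Finset.sum_mul, hWrow i]; ring
      _ ≤ ∑ j, W i j * y j :=
          Finset.sum_le_sum fun j _ => mul_le_mul_of_nonneg_left (hy j).1 (hW i j)
  obtain ⟨hl0, hl1⟩ := hlam
  obtain ⟨hg0, hg1⟩ := hγ
  obtain ⟨hu0, hu1⟩ := hu i
  have hp := stmt2_aux A W α lam β γ u x y i (hWrow i) hβ.1 1 zp (by rw [hzp]; ring)
  have hm := stmt2_aux A W α lam β γ u x y i (hWrow i) hβ.1 (-1) zm (by rw [hzm]; ring)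
  refine ⟨⟨hp.1, hp.2.1, hp.2.2.1, hp.2.2.2, ?_, ?_⟩, hm.1, hm.2.1, hm.2.2.1, hm.2.2.2, ?_, ?_⟩
  · rw [hzp]
    nlinarith [mul_nonneg (mul_nonneg (sub_nonneg.mpr hl1) (sub_nonneg.mpr hg1)) (by linarith : (0:ℝ) ≤ (∑ j, W i j * y j) + 1),
      mul_nonneg (mul_nonneg (sub_nonneg.mpr hl1) hg0) (by linarith : (0:ℝ) ≤ u i + 1)]
  · rw [hzp]
    nlinarith [mul_nonneg (mul_nonneg (sub_nonneg.mpr hl1) (sub_nonneg.mpr hg1)) (by linarith : (0:ℝ) ≤ 1 - ∑ j, W i j * y j),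
      mul_nonneg (mul_nonneg (sub_nonneg.mpr hl1) hg0) (by linarith : (0:ℝ) ≤ 1 - u i)]
  · rw [hzm]
    nlinarith [mul_nonneg (mul_nonneg (sub_nonneg.mpr hl1) (sub_nonneg.mpr hg1)) (by linarith : (0:ℝ) ≤ (∑ j, W i j * y j) + 1),
      mul_nonneg (mul_nonneg (sub_nonneg.mpr hl1) hg0) (by linarith : (0:ℝ) ≤ u i + 1)]
  · rw [hzm]
    nlinarith [mul_nonneg (mul_nonneg (sub_nonneg.mpr hl1) (sub_nonneg.mpr hg1)) (by linarith : (0:ℝ) ≤ 1 - ∑ j, W i j * y j),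
      mul_nonneg (mul_nonneg (sub_nonneg.mpr hl1) hg0) (by linarith : (0:ℝ) ≤ 1 - u i)]
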